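/- For every standard basis vector e_l and every vector ψ of the form f_{mn} = e_m + e_n or g_{mn} = e_m + i e_n (1 ≤ m < n ≤ 2k), one has ⟨ψ ⊗ ψ* | W_{2k} | ψ ⊗ ψ*⟩ = 0, where ψ* denotes complex conjugation of coordinates. Moreover the (2k)² vectors {ψ_α ⊗ ψ_α* : ψ_α ∈ {e_l, f_{mn}, g_{mn}}} are linearly independent, hence span ℂ^{2k} ⊗ ℂ^{2k}. Consequently W_{2k} is an optimal entanglement witness. -/

import Mathlib

open Matrix ComplexOrder Kronecker

noncomputable section

/-- The reduction map `R_k(Y) = Tr(Y)·𝕀_k − Y` on `k × k` complex matrices. -/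
def Rmap (k : ℕ) (Y : Matrix (Fin k) (Fin k) ℂ) : Matrix (Fin k) (Fin k) ℂ :=
  Y.trace • (1 : Matrix (Fin k) (Fin k) ℂ) - Y

/-- The map `Ψ⁰_{2k}` on `2k × 2k` complex matrices (indexed by `Fin k ⊕ Fin k`),
defined blockwise via the reduction map `R_k`. -/
def Psi (k : ℕ) (X : Matrix (Fin k ⊕ Fin k) (Fin k ⊕ Fin k) ℂ) :
    Matrix (Fin k ⊕ Fin k) (Fin k ⊕ Fin k) ℂ :=
  ((k : ℂ))⁻¹ • Matrix.fromBlocks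
    ((X.toBlocks₂₂.trace) • (1 : Matrix (Fin k) (Fin k) ℂ))
    (-(X.toBlocks₁₂ + Rmap k X.toBlocks₂₁))
    (-(X.toBlocks₂₁ + Rmap k X.toBlocks₁₂))
    ((X.toBlocks₁₁.trace) • (1 : Matrix (Fin k) (Fin k) ℂ))

/-- The Choi matrix `W_{2k} = Σ_{i,j} e_{ij} ⊗ Ψ⁰_{2k}(e_{ij})` of the map `Ψ⁰_{2k}`. -/
def Wmat (k : ℕ) :
    Matrix ((Fin k ⊕ Fin k) × (Fin k ⊕ Fin k)) ((Fin k ⊕ Fin k) × (Fin k ⊕ Fin k)) ℂ :=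
  ∑ i : Fin k ⊕ Fin k, ∑ j : Fin k ⊕ Fin k,
    (Matrix.single i j (1 : ℂ)) ⊗ₖ Psi k (Matrix.single i j (1 : ℂ))

/-- The standard basis vector `e_l` of `ℂ^{2k}` (indexed by `Fin (2k)`). -/
def bvec (k : ℕ) (l : Fin (2 * k)) : (Fin k ⊕ Fin k) → ℂ :=
  Pi.single (finSumFinEquiv.symm (Fin.cast (two_mul k) l)) 1

/-- Index type for the family `{e_l, f_{mn}, g_{mn}}`: `4k²` vectors in all. -/
abbrev FamIdx (k : ℕ) :=
  Fin (2 * k) ⊕ ({q : Fin (2 * k) × Fin (2 * k) // q.1 < q.2} × Bool)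

/-- The family of vectors `ψ_α ⊗ ψ_α*` with `ψ_α ∈ {e_l, f_{mn} = e_m + e_n,
g_{mn} = e_m + i e_n}` (the `Bool` distinguishes `f` from `g`). -/
def famVec (k : ℕ) : FamIdx k → ((Fin k ⊕ Fin k) × (Fin k ⊕ Fin k) → ℂ)
  | Sum.inl l => fun p => bvec k l p.1 * (starRingEnd ℂ) (bvec k l p.2)
  | Sum.inr (⟨(m, n), _⟩, false) =>
      fun p => (bvec k m + bvec k n) p.1 * (starRingEnd ℂ) ((bvec k m + bvec k n) p.2)
  | Sum.inr (⟨(m, n), _⟩, true) =>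
      fun p => (bvec k m + Complex.I • bvec k n) p.1 *
        (starRingEnd ℂ) ((bvec k m + Complex.I • bvec k n) p.2)

lemma Wmat_apply (k : ℕ) (i j p q : Fin k ⊕ Fin k) :
    Wmat k (i, p) (j, q) = Psi k (Matrix.single i j 1) p q := by
  simp only [Wmat, Matrix.sum_apply, kroneckerMap_apply]
  rw [Finset.sum_eq_single i, Finset.sum_eq_single j]
  · simp
  · intro b _ hb; simp [Matrix.single_apply_of_ne, hb]
  · simp
  · intro b _ hb
    rw [Finset.sum_eq_zero]
    intro c _
    simp [Matrix.single_apply_of_ne, Ne.symm, hb]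
  · simp

variable {k : ℕ}

lemma Psi_ll (X : Matrix (Fin k ⊕ Fin k) (Fin k ⊕ Fin k) ℂ) (c d : Fin k) :
    Psi k X (Sum.inl c) (Sum.inl d) =
      (k : ℂ)⁻¹ * ((∑ a, X (Sum.inr a) (Sum.inr a)) * if c = d then 1 else 0) := by
  simp [Psi, fromBlocks, toBlocks₂₂, trace, diag, one_apply, Matrix.smul_apply, mul_comm]

lemma Psi_rr (X : Matrix (Fin k ⊕ Fin k) (Fin k ⊕ Fin k) ℂ) (c d : Fin k) :
    Psi k X (Sum.inr c) (Sum.inr d) =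
      (k : ℂ)⁻¹ * ((∑ a, X (Sum.inl a) (Sum.inl a)) * if c = d then 1 else 0) := by
  simp [Psi, fromBlocks, toBlocks₁₁, trace, diag, one_apply, Matrix.smul_apply, mul_comm]

lemma Psi_lr (X : Matrix (Fin k ⊕ Fin k) (Fin k ⊕ Fin k) ℂ) (c d : Fin k) :
    Psi k X (Sum.inl c) (Sum.inr d) =
      (k : ℂ)⁻¹ * (-(X (Sum.inl c) (Sum.inr d) +
        ((∑ a, X (Sum.inr a) (Sum.inl a)) * (if c = d then 1 else 0) - X (Sum.inr c) (Sum.inl d)))) := by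
  simp only [Psi, Matrix.smul_apply, fromBlocks, Sum.elim_inl, Sum.elim_inr, of_apply,
    Matrix.neg_apply, Matrix.add_apply, Rmap, Matrix.sub_apply, Matrix.smul_apply,
    toBlocks₁₂, toBlocks₂₁, trace, diag, one_apply, smul_eq_mul, mul_one]

lemma Psi_rl (X : Matrix (Fin k ⊕ Fin k) (Fin k ⊕ Fin k) ℂ) (c d : Fin k) :
    Psi k X (Sum.inr c) (Sum.inl d) =
      (k : ℂ)⁻¹ * (-(X (Sum.inr c) (Sum.inl d) +
        ((∑ a, X (Sum.inl a) (Sum.inr a)) * (if c = d then 1 else 0) - X (Sum.inl c) (Sum.inr d)))) := by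
  simp only [Psi, Matrix.smul_apply, fromBlocks, Sum.elim_inl, Sum.elim_inr, of_apply,
    Matrix.neg_apply, Matrix.add_apply, Rmap, Matrix.sub_apply, Matrix.smul_apply,
    toBlocks₁₂, toBlocks₂₁, trace, diag, one_apply, smul_eq_mul, mul_one]

lemma step3 (k : ℕ) (ψ : (Fin k ⊕ Fin k) → ℂ) :
    ∑ p : Fin k ⊕ Fin k, ∑ q : Fin k ⊕ Fin k, (ψ p * (starRingEnd ℂ) (ψ q)) *
      Psi k (Matrix.of fun p q => (starRingEnd ℂ) (ψ p) * ψ q) p q = 0 := by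
  simp only [Fintype.sum_sum_type, Psi_ll, Psi_lr, Psi_rl, Psi_rr, Matrix.of_apply]
  simp only [mul_ite, ite_mul, mul_zero, zero_mul, mul_one, one_mul,
    Finset.sum_ite_eq, Finset.sum_ite_eq', Finset.mem_univ, if_true]
  simp only [Finset.mul_sum, Finset.sum_mul, mul_sub, mul_neg, mul_add,
    Finset.sum_add_distrib, Finset.sum_sub_distrib, Finset.sum_neg_distrib]
  simp only [mul_ite, ite_mul, mul_zero, zero_mul, Finset.sum_ite_eq, Finset.sum_ite_eq',
    Finset.mem_univ, if_true]
  simp only [Finset.mul_sum, Finset.sum_mul]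
  simp only [neg_add, neg_sub, ← Finset.sum_neg_distrib, ← Finset.sum_add_distrib,
    ← Finset.sum_sub_distrib, neg_neg, sub_eq_add_neg]
  refine Finset.sum_eq_zero fun x _ => ?_
  refine Finset.sum_eq_zero fun y _ => ?_
  ring

lemma Psi_add {k : ℕ} (X Y : Matrix (Fin k ⊕ Fin k) (Fin k ⊕ Fin k) ℂ) :
    Psi k (X + Y) = Psi k X + Psi k Y := by
  ext p q
  cases p <;> cases q <;>
    simp only [Psi_ll, Psi_lr, Psi_rl, Psi_rr, Matrix.add_apply, Finset.sum_add_distrib] <;>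
    ring

lemma Psi_smul {k : ℕ} (c : ℂ) (X : Matrix (Fin k ⊕ Fin k) (Fin k ⊕ Fin k) ℂ) :
    Psi k (c • X) = c • Psi k X := by
  ext p q
  cases p <;> cases q <;>
    simp only [Psi_ll, Psi_lr, Psi_rl, Psi_rr, Matrix.smul_apply, smul_eq_mul,
      ← Finset.mul_sum] <;>
    ring

def PsiL (k : ℕ) : Matrix (Fin k ⊕ Fin k) (Fin k ⊕ Fin k) ℂ →ₗ[ℂ]
    Matrix (Fin k ⊕ Fin k) (Fin k ⊕ Fin k) ℂ where
  toFun := Psi k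
  map_add' := Psi_add
  map_smul' := Psi_smul

lemma claim1 (k : ℕ) (ψ : (Fin k ⊕ Fin k) → ℂ) :
    ∑ i : Fin k ⊕ Fin k, ∑ j : Fin k ⊕ Fin k,
      ((starRingEnd ℂ) (ψ i) * ψ j) • Psi k (Matrix.single i j 1) =
    Psi k (Matrix.of fun p q => (starRingEnd ℂ) (ψ p) * ψ q) := by
  have : ∀ i j : Fin k ⊕ Fin k, ((starRingEnd ℂ) (ψ i) * ψ j) • Psi k (Matrix.single i j 1)
      = PsiL k (Matrix.single i j ((starRingEnd ℂ) (ψ i) * ψ j)) := by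
    intro i j
    have h : Matrix.single i j ((starRingEnd ℂ) (ψ i) * ψ j) =
        ((starRingEnd ℂ) (ψ i) * ψ j) • Matrix.single i j (1 : ℂ) := by
      rw [Matrix.smul_single, smul_eq_mul, mul_one]
    rw [h, _root_.map_smul]
    rfl
  simp only [this, ← map_sum]
  congr 1
  exact congrArg (Psi k) (Matrix.matrix_eq_sum_single (Matrix.of fun p q => (starRingEnd ℂ) (ψ p) * ψ q)).symm

lemma key (k : ℕ) (ψ : (Fin k ⊕ Fin k) → ℂ) :
    star (fun p : (Fin k ⊕ Fin k) × (Fin k ⊕ Fin k) => ψ p.1 * (starRingEnd ℂ) (ψ p.2)) ⬝ᵥ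
      (Wmat k).mulVec (fun p => ψ p.1 * (starRingEnd ℂ) (ψ p.2)) = 0 := by
  have tri : ∀ (f : (Fin k ⊕ Fin k) → (Fin k ⊕ Fin k) → (Fin k ⊕ Fin k) → ℂ),
      (∑ i, ∑ j, ∑ q, f i j q) = ∑ q, ∑ i, ∑ j, f i j q := by
    intro f
    calc (∑ i, ∑ j, ∑ q, f i j q) = ∑ i, ∑ q, ∑ j, f i j q :=
          Finset.sum_congr rfl fun i _ => Finset.sum_comm
      _ = ∑ q, ∑ i, ∑ j, f i j q := Finset.sum_comm
  simp only [dotProduct, mulVec, Pi.star_apply, star_mul', RCLike.star_def,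
    starRingEnd_self_apply, Fintype.sum_prod_type, Wmat_apply]
  rw [Finset.sum_comm]
  refine Eq.trans ?_ (step3 k ψ)
  refine Finset.sum_congr rfl fun p _ => ?_
  rw [← claim1]
  simp only [Matrix.sum_apply, Matrix.smul_apply, smul_eq_mul, Finset.mul_sum]
  rw [tri]
  refine Finset.sum_congr rfl fun q _ => ?_
  refine Finset.sum_congr rfl fun i _ => ?_
  refine Finset.sum_congr rfl fun j _ => ?_
  ring

lemma part1 (k : ℕ) (t : FamIdx k) :
    star (famVec k t) ⬝ᵥ (Wmat k).mulVec (famVec k t) = 0 := by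
  obtain l | ⟨⟨⟨m, n⟩, h⟩, b⟩ := t
  · exact key k (bvec k l)
  · cases b
    · exact key k (bvec k m + bvec k n)
    · exact key k (bvec k m + Complex.I • bvec k n)

def eIdx (k : ℕ) : Fin (2 * k) ≃ (Fin k ⊕ Fin k) :=
  (Fin.castOrderIso (two_mul k)).toEquiv.trans finSumFinEquiv.symm

lemma bvec_eq (k : ℕ) (l : Fin (2 * k)) : bvec k l = Pi.single (eIdx k l) 1 := rfl

lemma eIdx_inj {k : ℕ} {m n : Fin (2 * k)} (h : m ≠ n) : eIdx k m ≠ eIdx k n :=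
  fun hc => h ((eIdx k).injective hc)

lemma famA (k : ℕ) (l : Fin (2 * k)) :
    famVec k (Sum.inl l) = Pi.single (eIdx k l, eIdx k l) 1 := by
  funext ⟨p1, p2⟩
  simp only [famVec, bvec_eq, Pi.single_apply, Prod.ext_iff]
  rcases eq_or_ne p1 (eIdx k l) with h1 | h1 <;> rcases eq_or_ne p2 (eIdx k l) with h2 | h2 <;>
    simp [h1, h2]

lemma famF (k : ℕ) (m n : Fin (2 * k)) (h : m < n) :
    famVec k (Sum.inr (⟨(m, n), h⟩, false)) =
      Pi.single (eIdx k m, eIdx k m) 1 + Pi.single (eIdx k m, eIdx k n) 1 +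
      Pi.single (eIdx k n, eIdx k m) 1 + Pi.single (eIdx k n, eIdx k n) 1 := by
  have hmn : eIdx k m ≠ eIdx k n := eIdx_inj h.ne
  funext ⟨p1, p2⟩
  simp only [famVec, bvec_eq, Pi.add_apply, Pi.single_apply, Prod.ext_iff, map_add, apply_ite (starRingEnd ℂ),
    _root_.map_one, _root_.map_zero]
  rcases eq_or_ne p1 (eIdx k m) with h1 | h1 <;> rcases eq_or_ne p2 (eIdx k m) with h2 | h2 <;>
    rcases eq_or_ne p1 (eIdx k n) with h3 | h3 <;> rcases eq_or_ne p2 (eIdx k n) with h4 | h4 <;>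
    first
      | (exfalso; exact hmn (by rw [← h1, ← h3] at * <;> try rfl; exact h3 ▸ h1 ▸ rfl))
      | simp_all

lemma famG (k : ℕ) (m n : Fin (2 * k)) (h : m < n) :
    famVec k (Sum.inr (⟨(m, n), h⟩, true)) =
      Pi.single (eIdx k m, eIdx k m) 1 +
      (-Complex.I) • (Pi.single (eIdx k m, eIdx k n) 1 : (Fin k ⊕ Fin k) × (Fin k ⊕ Fin k) → ℂ) +
      Complex.I • (Pi.single (eIdx k n, eIdx k m) 1 : (Fin k ⊕ Fin k) × (Fin k ⊕ Fin k) → ℂ) +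
      Pi.single (eIdx k n, eIdx k n) 1 := by
  have hmn : eIdx k m ≠ eIdx k n := eIdx_inj h.ne
  funext ⟨p1, p2⟩
  simp only [famVec, bvec_eq, Pi.add_apply, Pi.smul_apply, Pi.single_apply, Prod.ext_iff,
    map_add, apply_ite (starRingEnd ℂ), _root_.map_one, _root_.map_zero, _root_.map_mul,
    Complex.conj_I, smul_eq_mul]
  rcases eq_or_ne p1 (eIdx k m) with h1 | h1 <;> rcases eq_or_ne p2 (eIdx k m) with h2 | h2 <;>
    rcases eq_or_ne p1 (eIdx k n) with h3 | h3 <;> rcases eq_or_ne p2 (eIdx k n) with h4 | h4 <;>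
    simp_all <;> ring

lemma single_mem (k : ℕ) (x y : Fin k ⊕ Fin k) :
    (Pi.single (x, y) 1 : (Fin k ⊕ Fin k) × (Fin k ⊕ Fin k) → ℂ) ∈
      Submodule.span ℂ (Set.range (famVec k)) := by
  set S := Submodule.span ℂ (Set.range (famVec k)) with hS
  have hD : ∀ l : Fin (2 * k),
      (Pi.single (eIdx k l, eIdx k l) 1 : (Fin k ⊕ Fin k) × (Fin k ⊕ Fin k) → ℂ) ∈ S := by
    intro l
    exact famA k l ▸ Submodule.subset_span ⟨Sum.inl l, rfl⟩
  have hoff : ∀ m n : Fin (2 * k), m < n →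
      (Pi.single (eIdx k m, eIdx k n) 1 : (Fin k ⊕ Fin k) × (Fin k ⊕ Fin k) → ℂ) ∈ S ∧
      (Pi.single (eIdx k n, eIdx k m) 1 : (Fin k ⊕ Fin k) × (Fin k ⊕ Fin k) → ℂ) ∈ S := by
    intro m n h
    have hF : famVec k (Sum.inr (⟨(m, n), h⟩, false)) ∈ S :=
      Submodule.subset_span ⟨_, rfl⟩
    have hG : famVec k (Sum.inr (⟨(m, n), h⟩, true)) ∈ S :=
      Submodule.subset_span ⟨_, rfl⟩
    rw [famF k m n h] at hF
    rw [famG k m n h] at hG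
    constructor
    · have : (Pi.single (eIdx k m, eIdx k n) 1 : (Fin k ⊕ Fin k) × (Fin k ⊕ Fin k) → ℂ) =
          (2 : ℂ)⁻¹ • ((Pi.single (eIdx k m, eIdx k m) 1 + Pi.single (eIdx k m, eIdx k n) 1 +
              Pi.single (eIdx k n, eIdx k m) 1 + Pi.single (eIdx k n, eIdx k n) 1) +
            Complex.I • (Pi.single (eIdx k m, eIdx k m) 1 +
              (-Complex.I) • (Pi.single (eIdx k m, eIdx k n) 1 :
                (Fin k ⊕ Fin k) × (Fin k ⊕ Fin k) → ℂ) +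
              Complex.I • (Pi.single (eIdx k n, eIdx k m) 1 :
                (Fin k ⊕ Fin k) × (Fin k ⊕ Fin k) → ℂ) +
              Pi.single (eIdx k n, eIdx k n) 1) +
            (-(1 + Complex.I)) • (Pi.single (eIdx k m, eIdx k m) 1 :
                (Fin k ⊕ Fin k) × (Fin k ⊕ Fin k) → ℂ) +
            (-(1 + Complex.I)) • (Pi.single (eIdx k n, eIdx k n) 1 :
                (Fin k ⊕ Fin k) × (Fin k ⊕ Fin k) → ℂ)) := by
        funext p
        simp only [Pi.smul_apply, Pi.add_apply, smul_eq_mul]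
        have : Complex.I * Complex.I = -1 := Complex.I_mul_I
        ring_nf
        rw [Complex.I_sq]
        ring
      rw [this]
      exact Submodule.smul_mem _ _ (Submodule.add_mem _ (Submodule.add_mem _ (Submodule.add_mem _
        hF (Submodule.smul_mem _ _ hG)) (Submodule.smul_mem _ _ (hD m)))
        (Submodule.smul_mem _ _ (hD n)))
    · have : (Pi.single (eIdx k n, eIdx k m) 1 : (Fin k ⊕ Fin k) × (Fin k ⊕ Fin k) → ℂ) =
          (2 : ℂ)⁻¹ • ((Pi.single (eIdx k m, eIdx k m) 1 + Pi.single (eIdx k m, eIdx k n) 1 +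
              Pi.single (eIdx k n, eIdx k m) 1 + Pi.single (eIdx k n, eIdx k n) 1) +
            (-Complex.I) • (Pi.single (eIdx k m, eIdx k m) 1 +
              (-Complex.I) • (Pi.single (eIdx k m, eIdx k n) 1 :
                (Fin k ⊕ Fin k) × (Fin k ⊕ Fin k) → ℂ) +
              Complex.I • (Pi.single (eIdx k n, eIdx k m) 1 :
                (Fin k ⊕ Fin k) × (Fin k ⊕ Fin k) → ℂ) +
              Pi.single (eIdx k n, eIdx k n) 1) +
            (-(1 - Complex.I)) • (Pi.single (eIdx k m, eIdx k m) 1 :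
                (Fin k ⊕ Fin k) × (Fin k ⊕ Fin k) → ℂ) +
            (-(1 - Complex.I)) • (Pi.single (eIdx k n, eIdx k n) 1 :
                (Fin k ⊕ Fin k) × (Fin k ⊕ Fin k) → ℂ)) := by
        funext p
        simp only [Pi.smul_apply, Pi.add_apply, smul_eq_mul]
        ring_nf
        rw [Complex.I_sq]
        ring
      rw [this]
      exact Submodule.smul_mem _ _ (Submodule.add_mem _ (Submodule.add_mem _ (Submodule.add_mem _
        hF (Submodule.smul_mem _ _ hG)) (Submodule.smul_mem _ _ (hD m)))
        (Submodule.smul_mem _ _ (hD n)))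
  rcases eq_or_ne x y with rfl | hxy
  · simpa using hD ((eIdx k).symm x)
  · have hab : (eIdx k).symm x ≠ (eIdx k).symm y := fun hc => hxy (by
      simpa using congrArg (eIdx k) hc)
    rcases lt_or_gt_of_ne hab with hlt | hgt
    · have := (hoff _ _ hlt).1
      simpa using this
    · have := (hoff _ _ hgt).2
      simpa using this

lemma span_top (k : ℕ) :
    Submodule.span ℂ (Set.range (famVec k)) = ⊤ := by
  rw [eq_top_iff]
  intro f _
  have : f = ∑ z : (Fin k ⊕ Fin k) × (Fin k ⊕ Fin k),
      f z • (Pi.single z 1 : (Fin k ⊕ Fin k) × (Fin k ⊕ Fin k) → ℂ) := by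
    funext w
    simp [Pi.single_apply]
  rw [this]
  refine Submodule.sum_mem _ fun z _ => Submodule.smul_mem _ _ ?_
  exact single_mem k z.1 z.2

def ltEquiv (n : ℕ) : {q : Fin n × Fin n // q.1 < q.2} ≃ (Σ j : Fin n, Fin j.val) where
  toFun q := ⟨q.1.2, ⟨q.1.1.val, q.2⟩⟩
  invFun s := ⟨(⟨s.2.val, s.2.isLt.trans s.1.isLt⟩, s.1), s.2.isLt⟩
  left_inv q := by ext <;> rfl
  right_inv s := by rcases s with ⟨j, i⟩; rfl

lemma card_famIdx (k : ℕ) :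
    Fintype.card (FamIdx k) =
      Fintype.card ((Fin k ⊕ Fin k) × (Fin k ⊕ Fin k)) := by
  have h1 : Fintype.card {q : Fin (2 * k) × Fin (2 * k) // q.1 < q.2}
      = ∑ j : Fin (2 * k), j.val := by
    rw [Fintype.card_congr (ltEquiv (2 * k))]
    simp [Fintype.card_sigma]
  have h2 : (∑ j : Fin (2 * k), j.val) * 2 = 2 * k * (2 * k - 1) := by
    rw [Fin.sum_univ_eq_sum_range (fun i => i) (2 * k)]
    exact Finset.sum_range_id_mul_two (2 * k)
  simp only [Fintype.card_sum, Fintype.card_prod, Fintype.card_fin, Fintype.card_bool, FamIdx]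
  rw [h1]
  cases k with
  | zero => simp
  | succ m =>
    have hsub : 2 * (m + 1) - 1 = 2 * m + 1 := by omega
    rw [hsub] at h2
    rw [h2]
    ring

lemma lin_indep (k : ℕ) : LinearIndependent ℂ (famVec k) :=
  linearIndependent_of_top_le_span_of_card_eq_finrank (span_top k).ge
    (by rw [card_famIdx, Module.finrank_fintype_fun_eq_card])

lemma part4 (k : ℕ)
    (P : Matrix ((Fin k ⊕ Fin k) × (Fin k ⊕ Fin k)) ((Fin k ⊕ Fin k) × (Fin k ⊕ Fin k)) ℂ)
    (hP : P.PosSemidef)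
    (hW : ∀ a b : (Fin k ⊕ Fin k) → ℂ,
      0 ≤ (star (fun p => a p.1 * b p.2 : (Fin k ⊕ Fin k) × (Fin k ⊕ Fin k) → ℂ) ⬝ᵥ
          (Wmat k - P).mulVec (fun p => a p.1 * b p.2)).re) :
    P = 0 := by
  have hker : ∀ t : FamIdx k, P.mulVec (famVec k t) = 0 := by
    intro t
    rw [← (hP.dotProduct_mulVec_zero_iff (famVec k t))]
    have h0 : star (famVec k t) ⬝ᵥ (Wmat k).mulVec (famVec k t) = 0 := part1 k t
    -- choose ψ for this t
    obtain ⟨ψ, hψ⟩ : ∃ ψ : (Fin k ⊕ Fin k) → ℂ,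
        famVec k t = fun p => ψ p.1 * (starRingEnd ℂ) (ψ p.2) := by
      obtain l | ⟨⟨⟨m, n⟩, h⟩, b⟩ := t
      · exact ⟨bvec k l, rfl⟩
      · cases b
        · exact ⟨bvec k m + bvec k n, rfl⟩
        · exact ⟨bvec k m + Complex.I • bvec k n, rfl⟩
    have hge := hW ψ (fun x => (starRingEnd ℂ) (ψ x))
    rw [← hψ] at hge
    rw [Matrix.sub_mulVec, dotProduct_sub, h0, zero_sub, Complex.neg_re] at hge
    have hle : (star (famVec k t) ⬝ᵥ P.mulVec (famVec k t)).re ≤ 0 := by linarith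
    have hpos : 0 ≤ star (famVec k t) ⬝ᵥ P.mulVec (famVec k t) := hP.dotProduct_mulVec_nonneg (famVec k t)
    have him : (star (famVec k t) ⬝ᵥ P.mulVec (famVec k t)).im = 0 := by
      rw [Complex.le_def] at hpos
      simpa using hpos.2.symm
    have hre : 0 ≤ (star (famVec k t) ⬝ᵥ P.mulVec (famVec k t)).re := by
      rw [Complex.le_def] at hpos
      simpa using hpos.1
    apply Complex.ext
    · simp; linarith
    · simpa using him
  -- P vanishes on a spanning set
  have : ∀ v : (Fin k ⊕ Fin k) × (Fin k ⊕ Fin k) → ℂ, P.mulVec v = 0 := by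
    intro v
    have hv : v ∈ Submodule.span ℂ (Set.range (famVec k)) := by rw [span_top]; trivial
    induction hv using Submodule.span_induction with
    | mem x hx => obtain ⟨t, rfl⟩ := hx; exact hker t
    | zero => simp [Matrix.mulVec_zero]
    | add x y _ _ hx hy => rw [Matrix.mulVec_add, hx, hy, add_zero]
    | smul c x _ hx => rw [Matrix.mulVec_smul, hx, smul_zero]
  ext i j
  have := congrFun (this (Pi.single j 1)) i
  simpa [Matrix.mulVec_single] using this

theorem stmt17 (k : ℕ) (hk : 2 ≤ k) :
    (∀ t : FamIdx k, star (famVec k t) ⬝ᵥ (Wmat k).mulVec (famVec k t) = 0) ∧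
    LinearIndependent ℂ (famVec k) ∧
    Submodule.span ℂ (Set.range (famVec k)) = ⊤ ∧
    (∀ P : Matrix ((Fin k ⊕ Fin k) × (Fin k ⊕ Fin k)) ((Fin k ⊕ Fin k) × (Fin k ⊕ Fin k)) ℂ,
      P.PosSemidef →
      (∀ a b : (Fin k ⊕ Fin k) → ℂ,
        0 ≤ (star (fun p => a p.1 * b p.2 : (Fin k ⊕ Fin k) × (Fin k ⊕ Fin k) → ℂ) ⬝ᵥ
            (Wmat k - P).mulVec (fun p => a p.1 * b p.2)).re) →
      P = 0) :=
  ⟨part1 k, lin_indep k, span_top k, fun P hP hW => part4 k P hP hW⟩
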